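/- Let M be a module over a k-algebra R and let a finite group G act on M by R-module automorphisms. Write M_G = M/N where N = span_k{m - g(m) : g ∈ G, m ∈ M}. If {m_i : i ∈ I} generates M as an R-module and {g_j : j ∈ J} generates G as a group, then the set {m_i - g_j(m_i), m_i - g_j^{-1}(m_i) : i ∈ I, j ∈ J} generates N as an R-module. -/
import Mathlib


/-- Let `M` be a module over a `k`-algebra `R` and let a finite group `G` act on
`M` by `R`-module automorphisms.  Write `M_G = M/N` where
`N = span_k {m - g • m : g ∈ G, m ∈ M}`.  If `{m_i : i ∈ I}` generates `M` as an `R`-module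
and `{g_j : j ∈ J}` generates `G`, then
`{m_i - g_j • m_i, m_i - g_j⁻¹ • m_i : i ∈ I, j ∈ J}` generates `N` as an `R`-module. -/
theorem cofixed_relations_generators
    (k : Type*) [CommRing k] (R : Type*) [CommRing R] [Algebra k R]
    (M : Type*) [AddCommGroup M] [Module k M] [Module R M] [IsScalarTower k R M]
    (G : Type*) [Group G] [Finite G] [DistribMulAction G M]
    [SMulCommClass G k M] [SMulCommClass G R M]
    {I J : Type*} (m : I → M) (g : J → G)
    (hm : Submodule.span R (Set.range m) = ⊤)
    (hg : Subgroup.closure (Set.range g) = ⊤) :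
    (Submodule.span R
        {x : M | ∃ i j, x = m i - g j • m i ∨ x = m i - (g j)⁻¹ • m i} : Set M) =
    (Submodule.span k {x : M | ∃ (u : M) (s : G), x = u - s • u} : Set M) := by
  haveI : SMulCommClass R G M := SMulCommClass.symm G R M
  set S := {x : M | ∃ i j, x = m i - g j • m i ∨ x = m i - (g j)⁻¹ • m i} with hS
  set T := {x : M | ∃ (u : M) (s : G), x = u - s • u} with hT
  -- every u - g j • u lies in span R S
  have key1 : ∀ (j : J) (u : M), u - g j • u ∈ Submodule.span R S := by
    intro j u
    have hu : u ∈ Submodule.span R (Set.range m) := hm ▸ Submodule.mem_top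
    induction hu using Submodule.span_induction with
    | mem y hy =>
      obtain ⟨i, rfl⟩ := hy
      exact Submodule.subset_span ⟨i, j, Or.inl rfl⟩
    | zero => simpa using zero_mem _
    | add a b _ _ ha hb =>
      have h : (a + b) - g j • (a + b) = (a - g j • a) + (b - g j • b) := by
        rw [smul_add]; abel
      rw [h]; exact add_mem ha hb
    | smul r a _ ha =>
      have h : (r • a) - g j • (r • a) = r • (a - g j • a) := by
        rw [smul_sub, smul_comm]
      rw [h]; exact Submodule.smul_mem _ r ha
  -- every u - s • u lies in span R S
  have key : ∀ (s : G) (u : M), u - s • u ∈ Submodule.span R S := by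
    intro s
    have hs : s ∈ Subgroup.closure (Set.range g) := hg ▸ Subgroup.mem_top s
    induction hs using Subgroup.closure_induction with
    | mem y hy => obtain ⟨j, rfl⟩ := hy; exact key1 j
    | one => intro u; simpa using zero_mem _
    | mul a b _ _ ha hb =>
      intro u
      have h : u - (a * b) • u = (u - b • u) + ((b • u) - a • (b • u)) := by
        rw [mul_smul]; abel
      rw [h]; exact add_mem (hb u) (ha (b • u))
    | inv a _ ha =>
      intro u
      have h : u - a⁻¹ • u = -((a⁻¹ • u) - a • (a⁻¹ • u)) := by
        rw [smul_inv_smul]; abel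
      rw [h]; exact neg_mem (ha (a⁻¹ • u))
  -- span k T is stable under the R-action
  have stab : ∀ (r : R) (x : M), x ∈ Submodule.span k T → r • x ∈ Submodule.span k T := by
    intro r x hx
    induction hx using Submodule.span_induction with
    | mem y hy =>
      obtain ⟨u, s, rfl⟩ := hy
      have h : r • (u - s • u) = (r • u) - s • (r • u) := by
        rw [smul_sub, smul_comm]
      rw [h]; exact Submodule.subset_span ⟨r • u, s, rfl⟩
    | zero => simpa using zero_mem _
    | add a b _ _ ha hb => rw [smul_add]; exact add_mem ha hb
    | smul c a _ ha => rw [smul_comm]; exact Submodule.smul_mem _ c ha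
  apply Set.Subset.antisymm
  · intro x hx
    simp only [SetLike.mem_coe] at hx ⊢
    induction hx using Submodule.span_induction with
    | mem y hy =>
      obtain ⟨i, j, h | h⟩ := hy
      · exact Submodule.subset_span ⟨m i, g j, h⟩
      · exact Submodule.subset_span ⟨m i, (g j)⁻¹, h⟩
    | zero => exact zero_mem _
    | add a b _ _ ha hb => exact add_mem ha hb
    | smul r a _ ha => exact stab r a ha
  · intro x hx
    simp only [SetLike.mem_coe] at hx ⊢
    induction hx using Submodule.span_induction with
    | mem y hy => obtain ⟨u, s, rfl⟩ := hy; exact key s u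
    | zero => exact zero_mem _
    | add a b _ _ ha hb => exact add_mem ha hb
    | smul c a _ ha =>
      rw [algebra_compatible_smul R c a]
      exact Submodule.smul_mem _ _ ha
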